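/- arXiv:0809.1307 — 2 statements merged into one kernel-verified Lean document; each statement's English description precedes it below -/
import Mathlib

section
/- Let R be a commutative integral domain, let ⋆ be a semistar operation of finite type on R, and let I be a quasi-⋆-ideal of R. If every minimal prime ideal of I is the radical of a ⋆-finite ideal of R, then the set Min(I) of prime ideals of R minimal over I is finite. -/
open Pointwise

/-- A semistar operation on an integral domain `R` with quotient field `K`:
a map `E ↦ E^⋆` on the nonzero `R`-submodules of `K` satisfying the usual axioms.
(The map is defined on all submodules, but the axioms are only required for the
nonzero ones.) -/
structure SemistarOperation (R K : Type*) [CommRing R] [IsDomain R] [Field K]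
    [Algebra R K] [IsFractionRing R K] where
  star : Submodule R K → Submodule R K
  smul_star : ∀ (x : K), x ≠ 0 → ∀ E : Submodule R K, E ≠ ⊥ → star (x • E) = x • star E
  mono : ∀ E F : Submodule R K, E ≠ ⊥ → E ≤ F → star E ≤ star F
  le_star : ∀ E : Submodule R K, E ≠ ⊥ → E ≤ star E
  star_star : ∀ E : Submodule R K, E ≠ ⊥ → star (star E) = star E

namespace SemistarOperation

variable {R K : Type*} [CommRing R] [IsDomain R] [Field K] [Algebra R K] [IsFractionRing R K]
variable (s : SemistarOperation R K)

/-- `⋆` is of finite type: for every nonzero submodule `E`, the module `E^⋆` is the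
union of the `F^⋆` over the nonzero finitely generated submodules `F ⊆ E`. -/
def FiniteType : Prop :=
  ∀ E : Submodule R K, E ≠ ⊥ → ∀ x : K,
    x ∈ s.star E ↔ ∃ F : Submodule R K, F.FG ∧ F ≠ ⊥ ∧ F ≤ E ∧ x ∈ s.star F

/-- `I^⋆`, for an ideal `I` of `R` (viewing `I` as a submodule of `K`). -/
def idealStar (I : Ideal R) : Submodule R K :=
  s.star (Submodule.map (Algebra.linearMap R K) I)

/-- `I^⋆ ∩ R`, as an ideal of `R`. -/
def contract (I : Ideal R) : Ideal R :=
  Submodule.comap (Algebra.linearMap R K) (s.idealStar I)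

/-- A (nonzero) ideal `I` of `R` is a quasi-`⋆`-ideal if `I^⋆ ∩ R = I`. -/
def IsQuasiStarIdeal (I : Ideal R) : Prop :=
  I ≠ ⊥ ∧ s.contract I = I

/-- A nonzero ideal `L` of `R` is `⋆`-finite if `L^⋆ = F^⋆` for some nonzero
finitely generated ideal `F` of `R`. -/
def IsStarFinite (L : Ideal R) : Prop :=
  L ≠ ⊥ ∧ ∃ F : Ideal R, F.FG ∧ F ≠ ⊥ ∧ s.idealStar F = s.idealStar L

/-- `⋆` is stable: it distributes over finite intersections (of nonzero submodules
with nonzero intersection). -/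
def Stable : Prop :=
  ∀ E F : Submodule R K, E ≠ ⊥ → F ≠ ⊥ → E ⊓ F ≠ ⊥ →
    s.star (E ⊓ F) = s.star E ⊓ s.star F

/-- `⋆-Min(I)`: the set of quasi-`⋆`-prime ideals of `R` minimal over `I`. -/
def starMin (I : Ideal R) : Set (Ideal R) :=
  {P | Minimal (fun Q : Ideal R => Q.IsPrime ∧ s.IsQuasiStarIdeal Q ∧ I ≤ Q) P}

/-- A nonzero ideal `I` of `R` is a `⋆`-SFT-ideal if there are a finitely generated
ideal `J ⊆ I` and a positive integer `k` with `a ^ k ∈ J^⋆` for every `a ∈ I^⋆`. -/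
def IsSFT (I : Ideal R) : Prop :=
  I ≠ ⊥ ∧ ∃ J : Ideal R, J.FG ∧ J ≤ I ∧ ∃ k : ℕ, 0 < k ∧
    ∀ a ∈ s.idealStar I, a ^ k ∈ s.idealStar J

/-- `R` is a `⋆`-SFT-ring if every nonzero ideal of `R` is a `⋆`-SFT-ideal. -/
def IsSFTRing : Prop := ∀ I : Ideal R, I ≠ ⊥ → s.IsSFT I

end SemistarOperation

section Aux

variable {R K : Type*} [CommRing R] [IsDomain R] [Field K] [Algebra R K] [IsFractionRing R K]

namespace SemistarOperation
set_option linter.unusedSectionVars false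

lemma aux_injective : Function.Injective (Algebra.linearMap R K) := fun a b hab => by
  exact IsFractionRing.injective R K hab

lemma map_ne_bot {J : Ideal R} (hJ : J ≠ ⊥) :
    Submodule.map (Algebra.linearMap R K) J ≠ ⊥ := by
  obtain ⟨j, hjJ, hj⟩ := (Submodule.ne_bot_iff _).mp hJ
  refine (Submodule.ne_bot_iff _).mpr ⟨Algebra.linearMap R K j, Submodule.mem_map_of_mem hjJ, ?_⟩
  simpa using fun hc => hj (IsFractionRing.injective R K (by simpa using hc))

lemma mul_ne_bot {E F : Submodule R K} (hE : E ≠ ⊥) (hF : F ≠ ⊥) : E * F ≠ ⊥ := by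
  obtain ⟨e, heE, he⟩ := (Submodule.ne_bot_iff _).mp hE
  obtain ⟨f, hfF, hf⟩ := (Submodule.ne_bot_iff _).mp hF
  exact (Submodule.ne_bot_iff _).mpr ⟨e * f, Submodule.mul_mem_mul heE hfF, mul_ne_zero he hf⟩

lemma pow_ne_bot {E : Submodule R K} (hE : E ≠ ⊥) (n : ℕ) : E ^ n ≠ ⊥ := by
  induction n with
  | zero =>
    rw [pow_zero]
    intro hbot
    have h1 : (1 : K) ∈ (1 : Submodule R K) := by
      rw [Submodule.one_eq_range]; exact ⟨1, by simp⟩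
    rw [hbot] at h1
    simpa using h1
  | succ n ih => rw [pow_succ]; exact mul_ne_bot ih hE

lemma smul_ne_bot {x : K} (hx : x ≠ 0) {E : Submodule R K} (hE : E ≠ ⊥) : x • E ≠ ⊥ := by
  obtain ⟨e, heE, he⟩ := (Submodule.ne_bot_iff _).mp hE
  exact (Submodule.ne_bot_iff _).mpr
    ⟨x • e, Submodule.smul_mem_pointwise_smul e x E heE, smul_ne_zero hx he⟩

variable (s : SemistarOperation R K)

lemma mul_star_le (E F : Submodule R K) (hF : F ≠ ⊥) : E * s.star F ≤ s.star (E * F) := by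
  rw [Submodule.mul_le]
  intro e he f hf
  by_cases he0 : e = 0
  · rw [he0, zero_mul]; exact zero_mem _
  have h1 : e * f ∈ e • s.star F := by
    simpa [smul_eq_mul] using Submodule.smul_mem_pointwise_smul f e (s.star F) hf
  rw [← s.smul_star e he0 F hF] at h1
  have h2 : e • F ≤ E * F := by
    intro z hz
    obtain ⟨w, hw, rfl⟩ := Set.mem_smul_set.mp
      (show z ∈ e • (F : Set K) by rw [← Submodule.coe_pointwise_smul]; exact hz)
    simpa [smul_eq_mul] using Submodule.mul_mem_mul he hw
  exact s.mono _ _ (smul_ne_bot he0 hF) h2 h1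

lemma star_mul_star_le (E F : Submodule R K) (hE : E ≠ ⊥) (hF : F ≠ ⊥) :
    s.star E * s.star F ≤ s.star (E * F) := by
  have hEF : E * F ≠ ⊥ := mul_ne_bot hE hF
  have h1 : s.star E * F ≤ s.star (E * F) := by
    have := s.mul_star_le F E hE
    rwa [mul_comm F (s.star E), mul_comm F E] at this
  have hsEF : s.star E * F ≠ ⊥ := by
    refine fun hbot => hEF (le_bot_iff.mp ?_)
    rw [← hbot]
    exact mul_le_mul_left (s.le_star E hE) F
  calc s.star E * s.star F ≤ s.star (s.star E * F) := s.mul_star_le (s.star E) F hF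
    _ ≤ s.star (s.star (E * F)) := s.mono _ _ hsEF h1
    _ = s.star (E * F) := s.star_star _ hEF

lemma pow_mem_star {E : Submodule R K} (hE : E ≠ ⊥) {x : K} (hx : x ∈ s.star E) (n : ℕ) :
    x ^ (n + 1) ∈ s.star (E ^ (n + 1)) := by
  induction n with
  | zero => simpa using hx
  | succ n ih =>
    have h1 : x ^ (n + 1) * x ∈ s.star (E ^ (n + 1)) * s.star E :=
      Submodule.mul_mem_mul ih hx
    have h2 := s.star_mul_star_le (E ^ (n + 1)) E (pow_ne_bot hE (n + 1)) hE h1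
    rwa [← pow_succ, ← pow_succ] at h2

lemma map_ideal_pow (J : Ideal R) (n : ℕ) :
    Submodule.map (Algebra.linearMap R K) (J ^ n)
      = (Submodule.map (Algebra.linearMap R K) J) ^ n := by
  have h := Submodule.map_pow (M := (J : Submodule R R)) (Algebra.ofId R K) n
  exact h

lemma le_contract {J : Ideal R} (hJ : J ≠ ⊥) : J ≤ s.contract J := fun r hr =>
  Submodule.mem_comap.mpr (s.le_star _ (map_ne_bot hJ) (Submodule.mem_map_of_mem hr))

lemma contract_mono {J1 J2 : Ideal R} (h1 : J1 ≠ ⊥) (h : J1 ≤ J2) :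
    s.contract J1 ≤ s.contract J2 :=
  Submodule.comap_mono (s.mono _ _ (map_ne_bot h1) (Submodule.map_mono h))

theorem isQuasiStarIdeal_minimalPrime (hs : s.FiniteType) {I P : Ideal R}
    (hI : s.IsQuasiStarIdeal I) (hP : P ∈ I.minimalPrimes) : s.IsQuasiStarIdeal P := by
  obtain ⟨hIbot, hIc⟩ := hI
  have hPp : P.IsPrime := hP.1.1
  have hIP : I ≤ P := hP.1.2
  have hPbot : P ≠ ⊥ := fun hb => hIbot (le_bot_iff.mp (hb ▸ hIP))
  refine ⟨hPbot, le_antisymm ?_ (s.le_contract hPbot)⟩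
  intro x hx
  rw [SemistarOperation.contract, Submodule.mem_comap] at hx
  by_cases hx0 : x = 0
  · exact hx0 ▸ P.zero_mem
  obtain ⟨F, hFfg, hFbot, hFle, hxF⟩ :=
    (hs _ (map_ne_bot hPbot) (Algebra.linearMap R K x)).mp hx
  set J : Ideal R := Submodule.comap (Algebra.linearMap R K) F with hJdef
  have hmapJ : Submodule.map (Algebra.linearMap R K) J = F := by
    rw [hJdef, Submodule.map_comap_eq, inf_eq_right]
    exact hFle.trans (LinearMap.map_le_range)
  have hJfg : J.FG :=
    Submodule.fg_of_fg_map_injective _ aux_injective (hmapJ ▸ hFfg)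
  have hJP : J ≤ P := by
    intro r hr
    obtain ⟨p, hp, hpe⟩ := hFle (show Algebra.linearMap R K r ∈ F from hr)
    rwa [aux_injective hpe] at hp
  have hJbot : J ≠ ⊥ := fun hb => hFbot (by rw [← hmapJ, hb, Submodule.map_bot])
  -- the saturation of I with respect to R \ P
  set I' : Ideal R :=
    { carrier := {r | ∃ t, t ∉ P ∧ t * r ∈ I}
      add_mem' := by
        rintro a b ⟨t1, ht1, hta⟩ ⟨t2, ht2, htb⟩
        refine ⟨t1 * t2, fun hc => (hPp.mem_or_mem hc).elim ht1 ht2, ?_⟩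
        have he : t1 * t2 * (a + b) = t2 * (t1 * a) + t1 * (t2 * b) := by ring
        rw [he]
        exact I.add_mem (I.mul_mem_left _ hta) (I.mul_mem_left _ htb)
      zero_mem' := ⟨1, fun hc => hPp.ne_top ((Ideal.eq_top_iff_one P).mpr hc),
        by simpa using I.zero_mem⟩
      smul_mem' := by
        rintro c x ⟨t, ht, htx⟩
        refine ⟨t, ht, ?_⟩
        have he : t * (c • x) = c * (t * x) := by rw [smul_eq_mul]; ring
        rw [he]
        exact I.mul_mem_left _ htx } with hI'def
  have hPrad : P ≤ I'.radical := by
    intro p hp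
    set S : Submonoid R :=
      { carrier := {r | ∃ t, t ∉ P ∧ ∃ n : ℕ, r = t * p ^ n}
        one_mem' := ⟨1, fun hc => hPp.ne_top ((Ideal.eq_top_iff_one P).mpr hc), 0, by ring⟩
        mul_mem' := by
          rintro a b ⟨t1, ht1, n1, rfl⟩ ⟨t2, ht2, n2, rfl⟩
          exact ⟨t1 * t2, fun hc => (hPp.mem_or_mem hc).elim ht1 ht2, n1 + n2, by ring⟩ }
    by_cases hdis : Disjoint (I : Set R) (S : Set R)
    · exfalso
      obtain ⟨Q, hQp, hIQ, hQdis⟩ := Ideal.exists_le_prime_disjoint I S hdis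
      have hQP : Q ≤ P := by
        intro q hq
        by_contra hqP
        exact Set.disjoint_left.mp hQdis hq ⟨q, hqP, 0, by ring⟩
      have hPQ : P ≤ Q := hP.2 ⟨hQp, hIQ⟩ hQP
      exact Set.disjoint_left.mp hQdis (hPQ hp)
        ⟨1, fun hc => hPp.ne_top ((Ideal.eq_top_iff_one P).mpr hc), 1, by ring⟩
    · rw [Set.not_disjoint_iff] at hdis
      obtain ⟨r, hrI, t, ht, n, rfl⟩ := hdis
      exact Ideal.mem_radical_iff.mpr ⟨n, ⟨t, ht, hrI⟩⟩
  obtain ⟨n, hn⟩ := Ideal.exists_pow_le_of_le_radical_of_fg (hJP.trans hPrad) hJfg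
  obtain ⟨m, rfl⟩ : ∃ m, n = m + 1 := by
    cases n with
    | zero =>
      exfalso
      have h1 : (1 : R) ∈ J ^ 0 := by rw [pow_zero, Ideal.one_eq_top]; trivial
      obtain ⟨t, ht, hti⟩ := hn h1
      exact ht (hIP (by simpa using hti))
    | succ m => exact ⟨m, rfl⟩
  -- choose a single multiplier s0 ∉ P with s0 * (J ^ (m+1)) ⊆ I
  have hJnfg : (J ^ (m + 1)).FG := Submodule.FG.pow hJfg (m + 1)
  obtain ⟨T, hT⟩ := hJnfg
  have hgen : ∀ g ∈ T, ∃ t, t ∉ P ∧ t * g ∈ I := fun g hg =>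
    hn (hT ▸ Ideal.subset_span hg)
  choose t htP htI using hgen
  set s0 : R := ∏ g ∈ T.attach, t g.1 g.2 with hs0def
  have hs0P : s0 ∉ P := fun hc => by
    have := Submonoid.prod_mem P.primeCompl
      (fun g (_ : g ∈ T.attach) => htP g.1 g.2) hc
    exact this
  have hs0J : ∀ g ∈ J ^ (m + 1), s0 * g ∈ I := by
    have hcol : J ^ (m + 1) ≤ I.colon (Ideal.span {s0}) := by
      rw [← hT, Ideal.span_le]
      intro g hg
      rw [SetLike.mem_coe, Ideal.mem_colon_span_singleton]
      obtain ⟨u, hu⟩ : t g hg ∣ s0 :=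
        Finset.dvd_prod_of_mem (fun g => t g.1 g.2) (Finset.mem_attach T ⟨g, hg⟩)
      have he : g * s0 = u * (t g hg * g) := by rw [hu]; ring
      rw [he]
      exact I.mul_mem_left u (htI g hg)
    intro g hg
    have := Ideal.mem_colon_span_singleton.mp (hcol hg)
    rwa [mul_comm] at this
  -- now pass through the star operation
  have hXn : (Algebra.linearMap R K x) ^ (m + 1)
      ∈ s.star (Submodule.map (Algebra.linearMap R K) (J ^ (m + 1))) := by
    rw [map_ideal_pow]
    exact s.pow_mem_star (map_ne_bot hJbot) (hmapJ ▸ hxF) m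
  set Y : K := Algebra.linearMap R K s0 with hYdef
  have hY0 : Y ≠ 0 := fun hc => hs0P (by
    have h0 : s0 = 0 := aux_injective (K := K)
      (show Algebra.linearMap R K s0 = Algebra.linearMap R K 0 by
        rw [hYdef] at hc; rw [hc]; simp)
    rw [h0]; exact P.zero_mem)
  have hJnbot : Submodule.map (Algebra.linearMap R K) (J ^ (m + 1)) ≠ ⊥ := by
    rw [map_ideal_pow]
    exact pow_ne_bot (map_ne_bot hJbot) (m + 1)
  have hsmul_le : Y • (Submodule.map (Algebra.linearMap R K) (J ^ (m + 1)))
      ≤ Submodule.map (Algebra.linearMap R K) I := by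
    intro z hz
    obtain ⟨w, hw, rfl⟩ := Set.mem_smul_set.mp
      (show z ∈ Y • ((Submodule.map (Algebra.linearMap R K) (J ^ (m + 1))) : Set K) by
        rw [← Submodule.coe_pointwise_smul]; exact hz)
    obtain ⟨g, hg, rfl⟩ := hw
    refine ⟨s0 * g, hs0J g hg, ?_⟩
    show Algebra.linearMap R K (s0 * g) = Y • Algebra.linearMap R K g
    rw [hYdef, smul_eq_mul, Algebra.linearMap_apply, Algebra.linearMap_apply,
      Algebra.linearMap_apply, map_mul]
  have hmem : Y * (Algebra.linearMap R K x) ^ (m + 1)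
      ∈ s.star (Submodule.map (Algebra.linearMap R K) I) := by
    have h2 : Y * (Algebra.linearMap R K x) ^ (m + 1)
        ∈ Y • s.star (Submodule.map (Algebra.linearMap R K) (J ^ (m + 1))) := by
      simpa [smul_eq_mul] using
        Submodule.smul_mem_pointwise_smul _ Y _ hXn
    rw [← s.smul_star Y hY0 _ hJnbot] at h2
    exact s.mono _ _ (smul_ne_bot hY0 hJnbot) hsmul_le h2
  have hcontr : s0 * x ^ (m + 1) ∈ s.contract I := by
    rw [SemistarOperation.contract, Submodule.mem_comap]
    have he : Algebra.linearMap R K (s0 * x ^ (m + 1))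
        = Y * (Algebra.linearMap R K x) ^ (m + 1) := by
      simp [hYdef, Algebra.linearMap_apply, map_mul, map_pow]
    rw [he]
    exact hmem
  rw [hIc] at hcontr
  have hxP : x ^ (m + 1) ∈ P := (hPp.mem_or_mem (hIP hcontr)).resolve_left hs0P
  exact hPp.mem_of_pow_mem _ hxP


end SemistarOperation

end Aux

/-- **Main theorem.**  Let `⋆` be a semistar operation of finite type on the integral
domain `R`, and let `I` be a quasi-`⋆`-ideal of `R`.  If every minimal prime ideal of
`I` is the radical of a `⋆`-finite ideal, then `I` has only finitely many minimal
prime ideals. -/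
theorem minimalPrimes_finite_of_quasiStarIdeal {R K : Type*} [CommRing R] [IsDomain R]
    [Field K] [Algebra R K] [IsFractionRing R K] (s : SemistarOperation R K)
    (hs : s.FiniteType) (I : Ideal R) (hI : s.IsQuasiStarIdeal I)
    (h : ∀ P ∈ I.minimalPrimes, ∃ L : Ideal R, s.IsStarFinite L ∧ P = L.radical) :
    I.minimalPrimes.Finite := by
  classical
  -- each minimal prime `P` contains a finitely generated ideal `F` such that `P`
  -- is the unique minimal prime over `I` containing `F`
  have key : ∀ P ∈ I.minimalPrimes, ∃ F : Ideal R, F.FG ∧ F ≤ P ∧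
      ∀ Q ∈ I.minimalPrimes, F ≤ Q → Q = P := by
    intro P hP
    obtain ⟨L, ⟨hLbot, F, hFfg, hFbot, hFL⟩, hPL⟩ := h P hP
    have hPq := s.isQuasiStarIdeal_minimalPrime hs hI hP
    have hLP : L ≤ P := hPL ▸ Ideal.le_radical
    have hcFL : s.contract F = s.contract L := by
      rw [SemistarOperation.contract, SemistarOperation.contract, hFL]
    refine ⟨F, hFfg, ?_, ?_⟩
    · calc F ≤ s.contract F := s.le_contract hFbot
        _ = s.contract L := hcFL
        _ ≤ s.contract P := s.contract_mono hLbot hLP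
        _ = P := hPq.2
    · intro Q hQ hFQ
      have hQq := s.isQuasiStarIdeal_minimalPrime hs hI hQ
      have hLQ : L ≤ Q := by
        calc L ≤ s.contract L := s.le_contract hLbot
          _ = s.contract F := hcFL.symm
          _ ≤ s.contract Q := s.contract_mono hFbot hFQ
          _ = Q := hQq.2
      have hPQ : P ≤ Q := by
        rw [hPL]
        calc L.radical ≤ Q.radical := Ideal.radical_mono hLQ
          _ = Q := hQ.1.1.radical
      exact le_antisymm (hQ.2 hP.1 hPQ) hPQ
  by_contra hinf
  haveI : Infinite I.minimalPrimes := Set.infinite_coe_iff.mpr hinf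
  -- take the ultrafilter limit of the (infinitely many) minimal primes
  set U : Ultrafilter I.minimalPrimes := Filter.hyperfilter I.minimalPrimes with hU
  let Q : Ideal R :=
    { carrier := {r | ∀ᶠ P : I.minimalPrimes in ↑U, r ∈ P.1}
      add_mem' := fun ha hb => (ha.and hb).mono fun P hp => P.1.add_mem hp.1 hp.2
      zero_mem' := Filter.Eventually.of_forall fun P => P.1.zero_mem
      smul_mem' := fun c x hx => hx.mono fun P hp => P.1.smul_mem c hp }
  have hQmem : ∀ r : R, r ∈ Q ↔ ∀ᶠ P : I.minimalPrimes in ↑U, r ∈ P.1 := fun r => Iff.rfl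
  have hQprime : Q.IsPrime := by
    refine ⟨?_, ?_⟩
    · intro htop
      have h1 : (1 : R) ∈ Q := htop ▸ Submodule.mem_top
      obtain ⟨P, hP1⟩ := ((hQmem 1).mp h1).exists
      exact P.2.1.1.ne_top ((Ideal.eq_top_iff_one _).mpr hP1)
    · intro x y hxy
      exact Ultrafilter.eventually_or.mp
        (((hQmem _).mp hxy).mono fun P hp => P.2.1.1.mem_or_mem hp)
  have hIQ : I ≤ Q := fun r hr =>
    (hQmem r).mpr (Filter.Eventually.of_forall fun P => P.2.1.2 hr)
  obtain ⟨P0, hP0, hP0Q⟩ := Ideal.exists_minimalPrimes_le (J := Q) hIQ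
  obtain ⟨F, hFfg, hFP0, huniq⟩ := key P0 hP0
  obtain ⟨T, hT⟩ := hFfg
  have hev : ∀ᶠ P : I.minimalPrimes in ↑U, F ≤ P.1 := by
    have hall : ∀ g ∈ T, ∀ᶠ P : I.minimalPrimes in ↑U, (g : R) ∈ P.1 := fun g hg =>
      (hQmem g).mp (hP0Q (hFP0 (hT ▸ Ideal.subset_span hg)))
    exact ((Filter.eventually_all_finset T).mpr hall).mono fun P hp =>
      hT ▸ Ideal.span_le.mpr fun g hg => hp g hg
  have hsingle : {P : I.minimalPrimes | P = ⟨P0, hP0⟩} ∈ U :=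
    hev.mono fun P hp => Subtype.ext (huniq P.1 P.2 hp)
  rw [Set.setOf_eq_eq_singleton] at hsingle
  exact Filter.notMem_hyperfilter_of_finite (Set.finite_singleton _) (hU ▸ hsingle)
end

section
/- Let R be a commutative integral domain and let ⋆ be a semistar operation on R that is stable and of finite type. If R is ⋆-Noetherian (i.e., R satisfies the ascending chain condition on quasi-⋆-ideals), then ⋆-Min(I) is finite for every nonzero ideal I of R. -/
open Pointwise

namespace SemistarOperation

variable {R K : Type*} [CommRing R] [IsDomain R] [Field K] [Algebra R K] [IsFractionRing R K]
variable (s : SemistarOperation R K)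

lemma aux_map_ne_bot {I : Ideal R} (h : I ≠ ⊥) :
    Submodule.map (Algebra.linearMap R K) I ≠ ⊥ := by
  obtain ⟨x, hx, hx0⟩ := (Submodule.ne_bot_iff _).mp h
  refine (Submodule.ne_bot_iff _).mpr ⟨Algebra.linearMap R K x,
    Submodule.mem_map_of_mem hx, fun h0 => hx0 ?_⟩
  exact IsFractionRing.injective R K (by simpa using h0)

lemma aux_le_contract {I : Ideal R} (h : I ≠ ⊥) : I ≤ s.contract I := by
  intro x hx
  have : (Algebra.linearMap R K) x ∈ Submodule.map (Algebra.linearMap R K) I :=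
    Submodule.mem_map_of_mem hx
  exact s.le_star _ (aux_map_ne_bot (K := K) h) this

lemma aux_contract_ne_bot {I : Ideal R} (h : I ≠ ⊥) : s.contract I ≠ ⊥ := by
  intro hbot
  exact h (le_bot_iff.mp (hbot ▸ s.aux_le_contract h))

lemma aux_contract_mono {I J : Ideal R} (hI : I ≠ ⊥) (h : I ≤ J) :
    s.contract I ≤ s.contract J := by
  apply Submodule.comap_mono
  exact s.mono _ _ (aux_map_ne_bot (K := K) hI) (Submodule.map_mono h)

lemma aux_idealStar_contract {I : Ideal R} (h : I ≠ ⊥) :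
    s.idealStar (s.contract I) = s.idealStar I := by
  set I₁ := Submodule.map (Algebra.linearMap R K) I with hI₁
  have hne : I₁ ≠ ⊥ := aux_map_ne_bot (K := K) h
  have hmap : Submodule.map (Algebra.linearMap R K) (s.contract I) =
      LinearMap.range (Algebra.linearMap R K) ⊓ s.star I₁ := by
    rw [contract, Submodule.map_comap_eq]; rfl
  have h1 : I₁ ≤ Submodule.map (Algebra.linearMap R K) (s.contract I) := by
    rw [hmap]
    exact le_inf (fun x hx => by obtain ⟨y, -, rfl⟩ := hx; exact ⟨y, rfl⟩) (s.le_star _ hne)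
  have hne' : Submodule.map (Algebra.linearMap R K) (s.contract I) ≠ ⊥ :=
    fun hb => hne (le_bot_iff.mp (hb ▸ h1))
  have h2 : Submodule.map (Algebra.linearMap R K) (s.contract I) ≤ s.star I₁ := by
    rw [hmap]; exact inf_le_right
  apply le_antisymm
  · have := s.mono _ _ hne' h2
    rwa [s.star_star _ hne] at this
  · exact s.mono _ _ hne h1

lemma aux_isQuasi_contract {I : Ideal R} (h : I ≠ ⊥) :
    s.IsQuasiStarIdeal (s.contract I) := by
  refine ⟨s.aux_contract_ne_bot h, ?_⟩
  have h2 : s.contract (s.contract I) =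
      Submodule.comap (Algebra.linearMap R K) (s.idealStar (s.contract I)) := rfl
  rw [h2, s.aux_idealStar_contract h]
  rfl

lemma aux_starMin_contract {I : Ideal R} (h : I ≠ ⊥) :
    s.starMin (s.contract I) = s.starMin I := by
  have hpred : (fun Q : Ideal R => Q.IsPrime ∧ s.IsQuasiStarIdeal Q ∧ s.contract I ≤ Q) =
      (fun Q : Ideal R => Q.IsPrime ∧ s.IsQuasiStarIdeal Q ∧ I ≤ Q) := by
    funext Q
    refine propext ⟨fun ⟨h1, h2, h3⟩ => ⟨h1, h2, le_trans (s.aux_le_contract h) h3⟩,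
      fun ⟨h1, h2, h3⟩ => ⟨h1, h2, ?_⟩⟩
    calc s.contract I ≤ s.contract Q := s.aux_contract_mono h h3
      _ = Q := h2.2
  unfold starMin
  rw [hpred]

end SemistarOperation

/-- Let `⋆` be a stable semistar operation of finite type on the integral domain `R`.
If `R` is `⋆`-Noetherian (i.e. `R` has the a.c.c. on quasi-`⋆`-ideals), then
`⋆-Min(I)` is finite for every nonzero ideal `I` of `R`. -/
theorem starMin_finite_of_starNoetherian {R K : Type*} [CommRing R] [IsDomain R]
    [Field K] [Algebra R K] [IsFractionRing R K] (s : SemistarOperation R K)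
    (hstable : s.Stable) (hs : s.FiniteType)
    (hacc : ∀ f : ℕ →o Ideal R, (∀ n, s.IsQuasiStarIdeal (f n)) →
      ∃ n, ∀ m, n ≤ m → f m = f n) :
    ∀ I : Ideal R, I ≠ ⊥ → (s.starMin I).Finite := by
  classical
  have key : ∀ J : Ideal R, s.IsQuasiStarIdeal J → (s.starMin J).Finite := by
    have wf : WellFounded ((· > ·) : {J : Ideal R // s.IsQuasiStarIdeal J} →
        {J : Ideal R // s.IsQuasiStarIdeal J} → Prop) := by
      refine @IsWellFounded.wf _ (· > ·) (wellFoundedGT_iff_monotone_chain_condition.mpr ?_)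
      intro f
      obtain ⟨n, hn⟩ := hacc ⟨fun m => (f m : Ideal R), fun a b h => f.mono h⟩
        (fun m => (f m).2)
      exact ⟨n, fun m hm => Subtype.ext (hn m hm).symm⟩
    have main : ∀ x : {J : Ideal R // s.IsQuasiStarIdeal J}, (s.starMin x.1).Finite := by
      intro x
      induction x using wf.induction with
      | _ x ih =>
        obtain ⟨J, hJne, hJc⟩ := x
        simp only at ih ⊢
        by_cases htop : J = ⊤
        · subst htop
          refine Set.Finite.subset (Set.finite_empty) fun Q hQ => ?_
          exact absurd (top_le_iff.mp hQ.1.2.2) hQ.1.1.ne_top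
        by_cases hprime : J.IsPrime
        · refine Set.Finite.subset (Set.finite_singleton J) fun Q hQ => ?_
          have := hQ.2 ⟨hprime, ⟨hJne, hJc⟩, le_refl J⟩ hQ.1.2.2
          exact le_antisymm this hQ.1.2.2
        · rcases Ideal.not_isPrime_iff.mp hprime with h | ⟨a, ha, b, hb, hab⟩
          · exact absurd h htop
          -- for c ∉ J, the closure of J ⊔ (c) is a strictly bigger quasi-⋆ ideal
          have step : ∀ c : R, c ∉ J →
              s.IsQuasiStarIdeal (s.contract (J ⊔ Ideal.span {c})) ∧
              J < s.contract (J ⊔ Ideal.span {c}) := by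
            intro c hc
            have hne : J ⊔ Ideal.span {c} ≠ ⊥ := fun hb =>
              hJne (le_bot_iff.mp (hb ▸ le_sup_left))
            have hle : J ≤ s.contract (J ⊔ Ideal.span {c}) :=
              le_trans le_sup_left (s.aux_le_contract hne)
            have hmem : c ∈ s.contract (J ⊔ Ideal.span {c}) :=
              s.aux_le_contract hne (Ideal.mem_sup_right (Ideal.mem_span_singleton_self c))
            exact ⟨s.aux_isQuasi_contract hne,
              lt_of_le_of_ne hle fun h => hc (h ▸ hmem)⟩
          obtain ⟨hqa, hlta⟩ := step a ha
          obtain ⟨hqb, hltb⟩ := step b hb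
          have fina := ih ⟨_, hqa⟩ hlta
          have finb := ih ⟨_, hqb⟩ hltb
          refine Set.Finite.subset (fina.union finb) fun Q hQ => ?_
          obtain ⟨⟨hQp, hQq, hJQ⟩, hQmin⟩ := hQ
          have hor : a ∈ Q ∨ b ∈ Q := hQp.mem_or_mem (hJQ hab)
          have sub : ∀ c : R, c ∉ J → c ∈ Q →
              Q ∈ s.starMin (s.contract (J ⊔ Ideal.span {c})) := by
            intro c hc hcQ
            have hne : J ⊔ Ideal.span {c} ≠ ⊥ := fun hb' =>
              hJne (le_bot_iff.mp (hb' ▸ le_sup_left))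
            have hcle : s.contract (J ⊔ Ideal.span {c}) ≤ Q := by
              calc s.contract (J ⊔ Ideal.span {c}) ≤ s.contract Q :=
                    s.aux_contract_mono hne
                      (sup_le hJQ ((Ideal.span_singleton_le_iff_mem Q).mpr hcQ))
                _ = Q := hQq.2
            refine ⟨⟨hQp, hQq, hcle⟩, fun Q' hQ' hle' => ?_⟩
            exact hQmin ⟨hQ'.1, hQ'.2.1,
              le_trans (le_trans le_sup_left (s.aux_le_contract hne)) hQ'.2.2⟩ hle'
          rcases hor with h | h
          · exact Or.inl (sub a ha h)
          · exact Or.inr (sub b hb h)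
    intro J hJ
    exact main ⟨J, hJ⟩
  intro I hI
  rw [← s.aux_starMin_contract hI]
  exact key _ (s.aux_isQuasi_contract hI)
end
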